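/- Let G=(V,E) be a finite simple graph, ω: E → ℚ an edge-weight function, χ: V → {1,…,c} a c-coloring, and S ⊆ V. For v ∈ S and i ∈ {1,…,c} let θ_v^i := ω({{v,w} ∈ E : w ∈ N(v)\S, χ(w) ≠ i}), and define T[S,c] as the maximum, over all functions σ: S → {1,…,c}, of the total weight of those edges of E with at least one endpoint in S that are properly colored under the coloring equal to σ on S and equal to χ on V\S. Let ω_S := ω({{u,v} ∈ E : {u,v} ∩ S ≠ ∅ and χ(u) ≠ χ(v)}) be the weight of all properly colored edges under χ with at least one endpoint in S. Then the maximum of ω(E(χ')) over all c-colorings χ' of G with D_flip(χ,χ') ⊆ S equals ω(E(χ)) − ω_S + T[S,c]. -/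
import Mathlib

open Finset
open scoped Classical

lemma split_sum
    {V : Type*} [Fintype V] [DecidableEq V]
    (G : SimpleGraph V) (ω : Sym2 V → ℚ)
    (χ χ' : V → ℕ) (S : Finset V)
    (h : ∀ v, v ∉ S → χ' v = χ v) :
    ∑ e ∈ G.edgeFinset.filter (fun e => ¬ (Sym2.map χ' e).IsDiag), ω e
      = (∑ e ∈ G.edgeFinset.filter (fun e =>
            (∃ u ∈ e, u ∈ S) ∧ ¬ (Sym2.map χ' e).IsDiag), ω e)
        + ∑ e ∈ G.edgeFinset.filter (fun e =>
            ¬ (∃ u ∈ e, u ∈ S) ∧ ¬ (Sym2.map χ e).IsDiag), ω e := by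
  have key : ∀ e ∈ G.edgeFinset, ¬ (∃ u ∈ e, u ∈ S) →
      Sym2.map χ' e = Sym2.map χ e := by
    intro e _ he
    induction e using Sym2.ind with
    | _ a b =>
      simp only [Sym2.map_pair_eq]
      have ha : a ∉ S := fun h' => he ⟨a, by simp, h'⟩
      have hb : b ∉ S := fun h' => he ⟨b, by simp, h'⟩
      rw [h a ha, h b hb]
  rw [← Finset.sum_filter_add_sum_filter_not
    (G.edgeFinset.filter (fun e => ¬ (Sym2.map χ' e).IsDiag))
    (fun e => ∃ u ∈ e, u ∈ S)]
  congr 1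
  · rw [Finset.filter_filter]
    apply Finset.sum_congr _ (fun _ _ => rfl)
    apply Finset.filter_congr
    intro e he
    tauto
  · rw [Finset.filter_filter]
    apply Finset.sum_congr _ (fun _ _ => rfl)
    apply Finset.filter_congr
    intro e he
    constructor
    · rintro ⟨h1, h2⟩; exact ⟨h2, by rw [← key e he h2]; exact h1⟩
    · rintro ⟨h2, h1⟩; exact ⟨by rw [key e he h2]; exact h1, h2⟩

theorem max_recoloring_eq
    {V : Type*} [Fintype V] [DecidableEq V]
    (G : SimpleGraph V) (ω : Sym2 V → ℚ)
    (c : ℕ) (χ : V → ℕ) (hχ : ∀ v, χ v ∈ Finset.Icc 1 c)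
    (S : Finset V)
    (T : ℚ)
    (hT : IsGreatest
      {x : ℚ | ∃ σ : V → ℕ, (∀ v ∈ S, σ v ∈ Finset.Icc 1 c) ∧
        x = ∑ e ∈ G.edgeFinset.filter (fun e =>
            (∃ u ∈ e, u ∈ S) ∧
            ¬ (Sym2.map (fun v => if v ∈ S then σ v else χ v) e).IsDiag), ω e}
      T) :
    IsGreatest
      {x : ℚ | ∃ χ' : V → ℕ, (∀ v, χ' v ∈ Finset.Icc 1 c) ∧
        (∀ v, v ∉ S → χ' v = χ v) ∧
        x = ∑ e ∈ G.edgeFinset.filter (fun e => ¬ (Sym2.map χ' e).IsDiag), ω e}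
      ((∑ e ∈ G.edgeFinset.filter (fun e => ¬ (Sym2.map χ e).IsDiag), ω e) -
        (∑ e ∈ G.edgeFinset.filter (fun e =>
            (∃ u ∈ e, u ∈ S) ∧ ¬ (Sym2.map χ e).IsDiag), ω e) + T) := by
  have base := split_sum G ω χ χ S (fun _ _ => rfl)
  set B := ∑ e ∈ G.edgeFinset.filter (fun e =>
      ¬ (∃ u ∈ e, u ∈ S) ∧ ¬ (Sym2.map χ e).IsDiag), ω e with hB
  -- target value = B + T
  have hval : (∑ e ∈ G.edgeFinset.filter (fun e => ¬ (Sym2.map χ e).IsDiag), ω e) -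
        (∑ e ∈ G.edgeFinset.filter (fun e =>
            (∃ u ∈ e, u ∈ S) ∧ ¬ (Sym2.map χ e).IsDiag), ω e) + T = B + T := by
    rw [base]; ring
  rw [hval]
  constructor
  · obtain ⟨σ, hσ, hTeq⟩ := hT.1
    refine ⟨fun v => if v ∈ S then σ v else χ v, ?_, ?_, ?_⟩
    · intro v; by_cases hv : v ∈ S <;> simp [hv, hσ v, hχ v]
    · intro v hv; simp [hv]
    · rw [split_sum G ω χ _ S (by intro v hv; simp [hv]), ← hTeq, ← hB]; ring
  · rintro x ⟨χ', h1, h2, rfl⟩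
    rw [split_sum G ω χ χ' S h2]
    have hfun : (fun v => if v ∈ S then χ' v else χ v) = χ' := by
      funext v; by_cases hv : v ∈ S
      · simp [hv]
      · simp [hv, h2 v hv]
    have : (∑ e ∈ G.edgeFinset.filter (fun e =>
            (∃ u ∈ e, u ∈ S) ∧ ¬ (Sym2.map χ' e).IsDiag), ω e) ≤ T := by
      apply hT.2
      exact ⟨χ', fun v hv => h1 v, by rw [hfun]⟩
    linarith
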